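/- Infinite-dimensional (Gateaux) gradient for depth-varying parameters: Let S > 0 and f : [0,S] × ℝ^{n_z} × ℝ^{n_θ} → ℝ^{n_z} be continuously differentiable. Let θ : [0,S] → ℝ^{n_θ} be continuous and let η : [0,S] → ℝ^{n_θ} be a continuous perturbation direction. Suppose for ε in a neighborhood of 0 there is a solution z_ε : [0,S] → ℝ^{n_z} of ż_ε(s) = f(s, z_ε(s), θ(s) + ε η(s)) with z_ε(0) = z₀ independent of ε, such that (s,ε) ↦ z_ε(s) is continuously differentiable and v(s) := ∂z_ε(s)/∂ε |_{ε=0} satisfies the variational equation v'(s) = (∂f/∂z)(s, z₀(s), θ(s)) v(s) + (∂f/∂θ)(s, z₀(s), θ(s)) η(s), v(0) = 0. Define ℓ(ε) = L(z_ε(S)) + ∫₀ᔆ l(τ, z_ε(τ)) dτ with L, l continuously differentiable. If a : [0,S] → ℝ^{n_z} is differentiable and satisfies a'(s)ᵀ = −a(s)ᵀ (∂f/∂z)(s, z₀(s), θ(s)) − (∂l/∂z)(s, z₀(s)) with a(S)ᵀ = (∂L/∂z)(z₀(S)), then the directional derivative of the loss at θ in direction η is dℓ/dε |_{ε=0} =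 ∫₀ᔆ a(τ)ᵀ (∂f/∂θ)(τ, z₀(τ), θ(τ)) η(τ) dτ; that is, the loss sensitivity to θ(s) is the function s ↦ a(s)ᵀ (∂f/∂θ)(s, z₀(s), θ(s)). -/

import Mathlib

open MeasureTheory Matrix

/-- The continuous linear map `w ↦ M *ᵥ w` given by a Jacobian matrix `M`. -/
noncomputable def mvCLM {m n : ℕ} (M : Matrix (Fin m) (Fin n) ℝ) :
    (Fin n → ℝ) →L[ℝ] (Fin m → ℝ) :=
  LinearMap.toContinuousLinearMap M.mulVecLin

/-- The continuous linear functional `w ↦ g ⬝ᵥ w` given by a gradient (row) vector `g`. -/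
noncomputable def dotCLM {n : ℕ} (g : Fin n → ℝ) : (Fin n → ℝ) →L[ℝ] ℝ :=
  LinearMap.toContinuousLinearMap
    { toFun := fun w => g ⬝ᵥ w
      map_add' := by intro x y; simp [dotProduct_add]
      map_smul' := by intro c x; simp [dotProduct_smul] }

lemma mvCLM_apply {m n : ℕ} (M : Matrix (Fin m) (Fin n) ℝ) (w : Fin n → ℝ) :
    mvCLM M w = M *ᵥ w := rfl

lemma dotCLM_apply {n : ℕ} (g : Fin n → ℝ) (w : Fin n → ℝ) :
    dotCLM g w = g ⬝ᵥ w := rfl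

/-- **Infinite-dimensional (Gateaux) gradient for depth-varying parameters.**
Perturbing the depth-varying parameter `θ` in a continuous direction `η`, the solution
`Z ε` of `ż = f(s, z, θ(s) + ε η(s))`, `Z ε 0 = z₀`, has sensitivity `v(s) = ∂Z ε(s)/∂ε|₀`
solving the variational equation, and the Gateaux derivative of the loss
`ℓ(ε) = L(Z ε S) + ∫₀ˢ l(τ, Z ε τ) dτ` at `ε = 0` equals
`∫₀ˢ a(τ)ᵀ (∂f/∂θ)(τ, Z 0 τ, θ(τ)) η(τ) dτ`, where `a` is the adjoint state;
i.e. the loss sensitivity to `θ(s)` is `s ↦ a(s)ᵀ (∂f/∂θ)(s, Z 0 s, θ(s))`. -/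
theorem infinite_dimensional_gateaux_gradient
    {nz nθ : ℕ} {S : ℝ} (hS : 0 < S)
    (f : ℝ → (Fin nz → ℝ) → (Fin nθ → ℝ) → (Fin nz → ℝ))
    (hf : ContDiff ℝ 1 (fun p : ℝ × (Fin nz → ℝ) × (Fin nθ → ℝ) => f p.1 p.2.1 p.2.2))
    (θ η : ℝ → (Fin nθ → ℝ))
    (hθ : ContinuousOn θ (Set.Icc 0 S)) (hη : ContinuousOn η (Set.Icc 0 S))
    -- perturbed solutions for `ε` in a neighborhood `(-δ, δ)` of `0`
    (δ : ℝ) (hδ : 0 < δ)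
    (Z : ℝ → ℝ → (Fin nz → ℝ)) (z₀ : Fin nz → ℝ)
    (hZ : ContDiffOn ℝ 1 (fun p : ℝ × ℝ => Z p.1 p.2) (Set.Ioo (-δ) δ ×ˢ Set.Icc 0 S))
    (hode : ∀ ε ∈ Set.Ioo (-δ) δ, ∀ s ∈ Set.Icc (0:ℝ) S,
      HasDerivAt (fun u => Z ε u) (f s (Z ε s) (θ s + ε • η s)) s)
    (hinit : ∀ ε ∈ Set.Ioo (-δ) δ, Z ε 0 = z₀)
    -- Jacobians of `f` along the unperturbed solution
    (Fz : ℝ → Matrix (Fin nz) (Fin nz) ℝ) (Fθ : ℝ → Matrix (Fin nz) (Fin nθ) ℝ)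
    (hFz : ∀ s ∈ Set.Icc (0:ℝ) S, HasFDerivAt (fun w => f s w (θ s)) (mvCLM (Fz s)) (Z 0 s))
    (hFθ : ∀ s ∈ Set.Icc (0:ℝ) S, HasFDerivAt (fun p => f s (Z 0 s) p) (mvCLM (Fθ s)) (θ s))
    -- `v(s) = ∂Z ε(s)/∂ε |_{ε=0}` satisfies the variational equation
    (v : ℝ → (Fin nz → ℝ))
    (hv : ∀ s ∈ Set.Icc (0:ℝ) S, HasDerivAt (fun ε => Z ε s) (v s) 0)
    (hvar : ∀ s ∈ Set.Icc (0:ℝ) S, HasDerivAt v (Fz s *ᵥ v s + Fθ s *ᵥ η s) s)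
    (hv0 : v 0 = 0)
    -- loss functions and their gradients
    (L : (Fin nz → ℝ) → ℝ) (l : ℝ → (Fin nz → ℝ) → ℝ)
    (hL : ContDiff ℝ 1 L)
    (hl : ContDiff ℝ 1 (fun p : ℝ × (Fin nz → ℝ) => l p.1 p.2))
    (Lz : Fin nz → ℝ) (lz : ℝ → (Fin nz → ℝ))
    (hLz : HasFDerivAt L (dotCLM Lz) (Z 0 S))
    (hlz : ∀ s ∈ Set.Icc (0:ℝ) S, HasFDerivAt (fun w => l s w) (dotCLM (lz s)) (Z 0 s))
    -- the adjoint state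
    (a : ℝ → (Fin nz → ℝ))
    (ha : ∀ s ∈ Set.Icc (0:ℝ) S, HasDerivAt a (-(a s ᵥ* Fz s) - lz s) s)
    (haS : a S = Lz) :
    HasDerivAt (fun ε : ℝ => L (Z ε S) + ∫ τ in (0:ℝ)..S, l τ (Z ε τ))
      (∫ τ in (0:ℝ)..S, a τ ⬝ᵥ (Fθ τ *ᵥ η τ)) 0 := by
  have hS' : (0:ℝ) ≤ S := hS.le
  have hSmem : S ∈ Set.Icc (0:ℝ) S := ⟨hS', le_rfl⟩
  have h0δ : (0:ℝ) ∈ Set.Ioo (-δ) δ := ⟨by linarith, hδ⟩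
  have hUuniq : UniqueDiffOn ℝ (Set.Ioo (-δ) δ ×ˢ Set.Icc (0:ℝ) S) :=
    (isOpen_Ioo.uniqueDiffOn).prod (uniqueDiffOn_Icc hS)
  -- the partial derivative of `Z` in the `ε` direction
  set W : ℝ × ℝ → (Fin nz → ℝ) :=
    fun p => fderivWithin ℝ (fun p : ℝ × ℝ => Z p.1 p.2)
      (Set.Ioo (-δ) δ ×ˢ Set.Icc (0:ℝ) S) p (1, 0) with hWdef
  have hWd : ∀ x ∈ Set.Ioo (-δ) δ, ∀ t ∈ Set.Icc (0:ℝ) S,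
      HasDerivAt (fun x => Z x t) (W (x, t)) x := by
    intro x hx t ht
    have hmem : ((x, t) : ℝ × ℝ) ∈ Set.Ioo (-δ) δ ×ˢ Set.Icc (0:ℝ) S := ⟨hx, ht⟩
    have hD : HasFDerivWithinAt (fun p : ℝ × ℝ => Z p.1 p.2)
        (fderivWithin ℝ (fun p : ℝ × ℝ => Z p.1 p.2) (Set.Ioo (-δ) δ ×ˢ Set.Icc (0:ℝ) S) (x, t))
        (Set.Ioo (-δ) δ ×ˢ Set.Icc (0:ℝ) S) (x, t) :=
      ((hZ.differentiableOn one_ne_zero) (x, t) hmem).hasFDerivWithinAt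
    have hj : HasDerivWithinAt (fun x : ℝ => ((x, t) : ℝ × ℝ)) ((1:ℝ), (0:ℝ))
        (Set.Ioo (-δ) δ) x :=
      ((hasDerivAt_id x).prodMk (hasDerivAt_const x t)).hasDerivWithinAt
    have hmaps : Set.MapsTo (fun x : ℝ => ((x, t) : ℝ × ℝ)) (Set.Ioo (-δ) δ)
        (Set.Ioo (-δ) δ ×ˢ Set.Icc (0:ℝ) S) := fun y hy => ⟨hy, ht⟩
    have hcomp := hD.comp_hasDerivWithinAt x hj hmaps
    exact hcomp.hasDerivAt (Ioo_mem_nhds hx.1 hx.2)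
  have hWc : ContinuousOn W (Set.Ioo (-δ) δ ×ˢ Set.Icc (0:ℝ) S) :=
    (hZ.continuousOn_fderivWithin hUuniq le_rfl).clm_apply continuousOn_const
  -- the `ε`-derivative of the integrand
  set F' : ℝ → ℝ → ℝ :=
    fun x t => fderiv ℝ (fun p : ℝ × (Fin nz → ℝ) => l p.1 p.2) (t, Z x t) ((0:ℝ), W (x, t))
    with hF'def
  have hF'd : ∀ t ∈ Set.Icc (0:ℝ) S, ∀ x ∈ Set.Ioo (-δ) δ,
      HasDerivAt (fun x => l t (Z x t)) (F' x t) x := by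
    intro t ht x hx
    have hcurve : HasDerivAt (fun x : ℝ => ((t, Z x t) : ℝ × (Fin nz → ℝ)))
        (((0:ℝ), W (x, t)) : ℝ × (Fin nz → ℝ)) x :=
      HasDerivAt.prodMk (hasDerivAt_const x t) (hWd x hx t ht)
    exact ((hl.differentiable one_ne_zero) (t, Z x t)).hasFDerivAt.comp_hasDerivAt x hcurve
  have hF'0 : ∀ t ∈ Set.Icc (0:ℝ) S, F' 0 t = lz t ⬝ᵥ v t := by
    intro t ht
    have h1 : HasDerivAt (fun x => l t (Z x t)) (F' 0 t) 0 := hF'd t ht 0 h0δ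
    have h2 : HasDerivAt (fun x => l t (Z x t)) (dotCLM (lz t) (v t)) 0 :=
      (hlz t ht).comp_hasDerivAt 0 (hv t ht)
    rw [dotCLM_apply] at h2
    exact h1.unique h2
  -- continuity of `F'` on a compact neighborhood
  have hZc : ContinuousOn (fun p : ℝ × ℝ => Z p.1 p.2) (Set.Ioo (-δ) δ ×ˢ Set.Icc (0:ℝ) S) :=
    hZ.continuousOn
  have hF'c : ContinuousOn (fun p : ℝ × ℝ => F' p.1 p.2)
      (Set.Ioo (-δ) δ ×ˢ Set.Icc (0:ℝ) S) := by
    have h1 : ContinuousOn (fun p : ℝ × ℝ => ((p.2, Z p.1 p.2) : ℝ × (Fin nz → ℝ)))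
        (Set.Ioo (-δ) δ ×ˢ Set.Icc (0:ℝ) S) := continuous_snd.continuousOn.prodMk hZc
    have h2 : ContinuousOn
        (fun p : ℝ × ℝ => fderiv ℝ (fun p : ℝ × (Fin nz → ℝ) => l p.1 p.2) (p.2, Z p.1 p.2))
        (Set.Ioo (-δ) δ ×ˢ Set.Icc (0:ℝ) S) :=
      (hl.continuous_fderiv one_ne_zero).comp_continuousOn h1
    exact h2.clm_apply (continuousOn_const.prodMk hWc)
  have hKU : Set.Icc (-(δ/2)) (δ/2) ×ˢ Set.Icc (0:ℝ) S ⊆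
      Set.Ioo (-δ) δ ×ˢ Set.Icc (0:ℝ) S := by
    rintro ⟨x, t⟩ ⟨hx, ht⟩
    exact ⟨⟨by simp only [Set.mem_Icc] at hx; linarith [hx.1], by
      simp only [Set.mem_Icc] at hx; linarith [hx.2]⟩, ht⟩
  obtain ⟨C, hC⟩ := (isCompact_Icc.prod isCompact_Icc).exists_bound_of_continuousOn
    (hF'c.mono hKU)
  have hIoc : Set.uIoc (0:ℝ) S ⊆ Set.Icc (0:ℝ) S := by
    rw [Set.uIoc_of_le hS']; exact Set.Ioc_subset_Icc_self
  -- continuity of the integrand slices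
  have hZslice : ∀ x ∈ Set.Ioo (-δ) δ, ContinuousOn (fun t => Z x t) (Set.Icc (0:ℝ) S) := by
    intro x hx
    exact hZc.comp ((continuous_const.prodMk continuous_id).continuousOn)
      (fun t ht => ⟨hx, ht⟩)
  have hFcont : ∀ x ∈ Set.Ioo (-δ) δ, ContinuousOn (fun t => l t (Z x t))
      (Set.Icc (0:ℝ) S) := by
    intro x hx
    exact hl.continuous.comp_continuousOn (continuousOn_id.prodMk (hZslice x hx))
  -- differentiation under the integral sign
  have key : IntervalIntegrable (F' 0) volume 0 S ∧
      HasDerivAt (fun x => ∫ t in (0:ℝ)..S, l t (Z x t)) (∫ t in (0:ℝ)..S, F' 0 t) 0 := by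
    apply intervalIntegral.hasDerivAt_integral_of_dominated_loc_of_deriv_le
      (F := fun x t => l t (Z x t)) (bound := fun _ => C) (Metric.ball_mem_nhds 0 (half_pos hδ))
    · filter_upwards [Ioo_mem_nhds (neg_neg_iff_pos.mpr hδ) hδ] with x hx
      exact ((hFcont x hx).mono hIoc).aestronglyMeasurable measurableSet_uIoc
    · apply ContinuousOn.intervalIntegrable
      rw [Set.uIcc_of_le hS']; exact hFcont 0 h0δ
    · exact (ContinuousOn.aestronglyMeasurable
        ((hF'c.comp ((continuous_const.prodMk continuous_id).continuousOn)
          (fun t ht => ⟨h0δ, ht⟩)).mono hIoc) measurableSet_uIoc)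
    · refine Filter.Eventually.of_forall (fun t ht x hx => ?_)
      rw [Metric.mem_ball, Real.dist_eq, sub_zero] at hx
      obtain ⟨hx1, hx2⟩ := abs_lt.mp hx
      exact hC (x, t) ⟨⟨hx1.le, hx2.le⟩, hIoc ht⟩
    · exact intervalIntegrable_const
    · refine Filter.Eventually.of_forall (fun t ht x hx => ?_)
      rw [Metric.mem_ball, Real.dist_eq, sub_zero] at hx
      obtain ⟨hx1, hx2⟩ := abs_lt.mp hx
      exact hF'd t (hIoc ht) x ⟨by linarith, by linarith⟩
  have hinteq : (∫ t in (0:ℝ)..S, F' 0 t) = ∫ t in (0:ℝ)..S, lz t ⬝ᵥ v t := by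
    apply intervalIntegral.integral_congr
    intro t ht
    exact hF'0 t (by rwa [Set.uIcc_of_le hS'] at ht)
  -- continuity facts for the adjoint argument
  have hvc : ContinuousOn v (Set.Icc (0:ℝ) S) :=
    fun s hs => ((hvar s hs).continuousAt).continuousWithinAt
  have hac : ContinuousOn a (Set.Icc (0:ℝ) S) :=
    fun s hs => ((ha s hs).continuousAt).continuousWithinAt
  have hZ0c : ContinuousOn (fun s => Z 0 s) (Set.Icc (0:ℝ) S) := hZslice 0 h0δ
  have hffd := hf.differentiable one_ne_zero
  -- identify `Fθ s *ᵥ w` with the full derivative of `f`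
  have hFθeq : ∀ s ∈ Set.Icc (0:ℝ) S, ∀ w : Fin nθ → ℝ,
      Fθ s *ᵥ w = fderiv ℝ (fun p : ℝ × (Fin nz → ℝ) × (Fin nθ → ℝ) => f p.1 p.2.1 p.2.2)
        (s, Z 0 s, θ s) (0, 0, w) := by
    intro s hs w
    have hj : HasFDerivAt (fun p : Fin nθ → ℝ => ((s, Z 0 s, p) : ℝ × (Fin nz → ℝ) × (Fin nθ → ℝ)))
        ((0 : (Fin nθ → ℝ) →L[ℝ] ℝ).prod
          ((0 : (Fin nθ → ℝ) →L[ℝ] (Fin nz → ℝ)).prod (ContinuousLinearMap.id ℝ (Fin nθ → ℝ))))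
        (θ s) :=
      (hasFDerivAt_const s (θ s)).prodMk ((hasFDerivAt_const (Z 0 s) (θ s)).prodMk (hasFDerivAt_id _))
    have hcomp := ((hffd (s, Z 0 s, θ s)).hasFDerivAt).comp (θ s) hj
    have huniq := (hFθ s hs).unique hcomp
    have happ := congrArg (fun T : (Fin nθ → ℝ) →L[ℝ] (Fin nz → ℝ) => T w) huniq
    simpa [mvCLM_apply] using happ
  -- identify `lz s ⬝ᵥ w` with the full derivative of `l`
  have hlfd := hl.differentiable one_ne_zero
  have hlzeq : ∀ s ∈ Set.Icc (0:ℝ) S, ∀ w : Fin nz → ℝ,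
      lz s ⬝ᵥ w = fderiv ℝ (fun p : ℝ × (Fin nz → ℝ) => l p.1 p.2) (s, Z 0 s) (0, w) := by
    intro s hs w
    have hj : HasFDerivAt (fun p : Fin nz → ℝ => ((s, p) : ℝ × (Fin nz → ℝ)))
        ((0 : (Fin nz → ℝ) →L[ℝ] ℝ).prod (ContinuousLinearMap.id ℝ (Fin nz → ℝ))) (Z 0 s) :=
      (hasFDerivAt_const s (Z 0 s)).prodMk (hasFDerivAt_id _)
    have hcomp := ((hlfd (s, Z 0 s)).hasFDerivAt).comp (Z 0 s) hj
    have huniq := (hlz s hs).unique hcomp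
    have happ := congrArg (fun T : (Fin nz → ℝ) →L[ℝ] ℝ => T w) huniq
    simpa [dotCLM_apply] using happ
  -- continuity of the relevant integrands
  have hΦc : ContinuousOn
      (fun s => fderiv ℝ (fun p : ℝ × (Fin nz → ℝ) × (Fin nθ → ℝ) => f p.1 p.2.1 p.2.2)
        (s, Z 0 s, θ s)) (Set.Icc (0:ℝ) S) :=
    (hf.continuous_fderiv one_ne_zero).comp_continuousOn (continuousOn_id.prodMk (hZ0c.prodMk hθ))
  have hFθηc : ContinuousOn (fun s => Fθ s *ᵥ η s) (Set.Icc (0:ℝ) S) := by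
    have h0 : ContinuousOn (fun s : ℝ => (((0:ℝ), ((0 : Fin nz → ℝ), η s)) :
        ℝ × (Fin nz → ℝ) × (Fin nθ → ℝ))) (Set.Icc (0:ℝ) S) :=
      continuousOn_const.prodMk (continuousOn_const.prodMk hη)
    have h1 := hΦc.clm_apply h0
    exact h1.congr (fun s hs => hFθeq s hs (η s))
  have haFθηc : ContinuousOn (fun s => a s ⬝ᵥ (Fθ s *ᵥ η s)) (Set.Icc (0:ℝ) S) := by
    have : ContinuousOn (fun s => ∑ i, a s i * (Fθ s *ᵥ η s) i) (Set.Icc (0:ℝ) S) :=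
      continuousOn_finset_sum _ fun i _ =>
        ((continuous_apply i).comp_continuousOn hac).mul
          ((continuous_apply i).comp_continuousOn hFθηc)
    exact this.congr (fun s _ => rfl)
  have hΨc : ContinuousOn
      (fun s => fderiv ℝ (fun p : ℝ × (Fin nz → ℝ) => l p.1 p.2) (s, Z 0 s))
      (Set.Icc (0:ℝ) S) :=
    (hl.continuous_fderiv one_ne_zero).comp_continuousOn (continuousOn_id.prodMk hZ0c)
  have hlzvc : ContinuousOn (fun s => lz s ⬝ᵥ v s) (Set.Icc (0:ℝ) S) := by
    have h0 : ContinuousOn (fun s : ℝ => (((0:ℝ), v s) : ℝ × (Fin nz → ℝ)))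
        (Set.Icc (0:ℝ) S) := continuousOn_const.prodMk hvc
    have h1 := hΨc.clm_apply h0
    exact h1.congr (fun s hs => hlzeq s hs (v s))
  -- the derivative of `s ↦ a s ⬝ᵥ v s`
  have hgderiv : ∀ s ∈ Set.uIcc (0:ℝ) S, HasDerivAt (fun s => a s ⬝ᵥ v s)
      (a s ⬝ᵥ (Fθ s *ᵥ η s) - lz s ⬝ᵥ v s) s := by
    intro s hs
    rw [Set.uIcc_of_le hS'] at hs
    have hsum : HasDerivAt (fun u => ∑ i, a u i * v u i)
        (∑ i, ((-(a s ᵥ* Fz s) - lz s) i * v s i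
          + a s i * (Fz s *ᵥ v s + Fθ s *ᵥ η s) i)) s :=
      HasDerivAt.fun_sum fun i _ =>
        (hasDerivAt_pi.1 (ha s hs) i).mul (hasDerivAt_pi.1 (hvar s hs) i)
    have heq : (∑ i, ((-(a s ᵥ* Fz s) - lz s) i * v s i
          + a s i * (Fz s *ᵥ v s + Fθ s *ᵥ η s) i))
        = a s ⬝ᵥ (Fθ s *ᵥ η s) - lz s ⬝ᵥ v s := by
      rw [Finset.sum_add_distrib]
      show ((-(a s ᵥ* Fz s) - lz s) ⬝ᵥ v s) + (a s ⬝ᵥ (Fz s *ᵥ v s + Fθ s *ᵥ η s)) = _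
      rw [sub_dotProduct, neg_dotProduct, dotProduct_add,
        dotProduct_mulVec]
      ring
    rw [heq] at hsum
    exact hsum
  have hint1 : IntervalIntegrable (fun s => a s ⬝ᵥ (Fθ s *ᵥ η s)) volume 0 S := by
    apply ContinuousOn.intervalIntegrable; rw [Set.uIcc_of_le hS']; exact haFθηc
  have hint2 : IntervalIntegrable (fun s => lz s ⬝ᵥ v s) volume 0 S := by
    apply ContinuousOn.intervalIntegrable; rw [Set.uIcc_of_le hS']; exact hlzvc
  have hψint : IntervalIntegrable (fun s => a s ⬝ᵥ (Fθ s *ᵥ η s) - lz s ⬝ᵥ v s) volume 0 S :=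
    hint1.sub hint2
  have hftc := intervalIntegral.integral_eq_sub_of_hasDerivAt hgderiv hψint
  rw [hv0, dotProduct_zero, sub_zero, haS] at hftc
  have hsplit : (∫ s in (0:ℝ)..S, a s ⬝ᵥ (Fθ s *ᵥ η s))
      = Lz ⬝ᵥ v S + ∫ s in (0:ℝ)..S, lz s ⬝ᵥ v s := by
    rw [← hftc, intervalIntegral.integral_sub hint1 hint2]; ring
  have HL : HasDerivAt (fun ε => L (Z ε S)) (Lz ⬝ᵥ v S) 0 := by
    have h := hLz.comp_hasDerivAt 0 (hv S hSmem)
    rwa [dotCLM_apply] at h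
  have Hsum := HL.add key.2
  have hval : (Lz ⬝ᵥ v S + ∫ t in (0:ℝ)..S, F' 0 t)
      = ∫ τ in (0:ℝ)..S, a τ ⬝ᵥ (Fθ τ *ᵥ η τ) := by
    rw [hinteq, hsplit]
  rw [hval] at Hsum
  exact Hsum
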